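/- arXiv:2210.03859 — 2 statements merged into one kernel-verified Lean document; each statement's English description precedes it below -/
import Mathlib

section
/- Let Ḡ > 0, D̄ ∈ ℝ, α > 0, ζ ≥ 0 with D̄ + ζ > 0, reals q₀, q₁, and priors π₀, π₁ > 0 with π₀ + π₁ = 1. The function h(θ) = π₀ Φ((−Ḡ + α(q₀ − q₁ − 2θ))/(2√α √(D̄+ζ))) + π₁ Φ((−Ḡ − α(q₀ − q₁ − 2θ))/(2√α √(D̄+ζ))), θ ∈ ℝ, attains its global minimum at the unique minimizer θ* = (1/2)(q₀ − q₁) − ((D̄+ζ)/Ḡ)·log(π₁/π₀). -/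
open MeasureTheory ProbabilityTheory Filter Matrix
open scoped BigOperators

noncomputable section

/-- The positive spiked index set `𝕀₁ = {1,…,r₁}` (as integers). -/
def I1 (r₁ : ℕ) : Finset ℤ := Finset.Icc 1 (r₁ : ℤ)

/-- The negative spiked index set `𝕀₂ = {−r₂,…,−1}` (as integers). -/
def I2 (r₂ : ℕ) : Finset ℤ := Finset.Icc (-(r₂ : ℤ)) (-1)

/-- 0-based position in `Fin p` of the spiked index `j ∈ 𝕀` :
for `j > 0` it is the `j`-th largest (position `j−1`), and for `j < 0`
it is position `p + j` (i.e. the 1-based position `p + 1 + j`). -/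
def spikeIdx (p : ℕ) (hp : 0 < p) (j : ℤ) : Fin p :=
  ⟨((if 0 < j then j - 1 else j) % (p : ℤ)).toNat, by
    have hp' : (0 : ℤ) < (p : ℤ) := by exact_mod_cast hp
    have h1 := Int.emod_nonneg (if 0 < j then j - 1 else j) (ne_of_gt hp')
    have h2 := Int.emod_lt_of_pos (if 0 < j then j - 1 else j) hp'
    omega⟩

/-- `a_j = (λ_j² − J)/(λ_j(λ_j + J))`. -/
def aCoef (J : ℝ) (lam : ℤ → ℝ) (j : ℤ) : ℝ := (lam j ^ 2 - J) / (lam j * (lam j + J))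

/-- `γ_{i,j} = γ_i λ_j/(1 + γ_i λ_j)`. -/
def gamCoef (lam : ℤ → ℝ) (γ : ℝ) (j : ℤ) : ℝ := γ * lam j / (1 + γ * lam j)

/-- `Ḡ` with general per-index weights `g1` (on `𝕀₁`) and `g2` (on `𝕀₂`). -/
def GbarGen (J : ℝ) (lam b g1 g2 : ℤ → ℝ) (r₁ r₂ : ℕ) : ℝ :=
  1 - ∑ j ∈ I1 r₁, aCoef J lam j * b j * g1 j
    - ∑ j ∈ I2 r₂, aCoef J lam j * b j * g2 j

/-- `D̄` with general per-index weights `g1` (on `𝕀₁`) and `g2` (on `𝕀₂`). -/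
def DbarGen (J : ℝ) (lam b g1 g2 : ℤ → ℝ) (r₁ r₂ : ℕ) : ℝ :=
  1 + ∑ j ∈ I1 r₁ ∪ I2 r₂, lam j * b j
    - 2 * (∑ j ∈ I1 r₁, (lam j + 1) * aCoef J lam j * b j * g1 j
         + ∑ j ∈ I2 r₂, (lam j + 1) * aCoef J lam j * b j * g2 j)
    + (∑ j ∈ I1 r₁, aCoef J lam j * b j * (lam j * aCoef J lam j + 1) * g1 j ^ 2
     + ∑ j ∈ I2 r₂, aCoef J lam j * b j * (lam j * aCoef J lam j + 1) * g2 j ^ 2)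

/-- `Ḡ(γ₁,γ₂)`. -/
def Gbar (J : ℝ) (lam b : ℤ → ℝ) (r₁ r₂ : ℕ) (γ₁ γ₂ : ℝ) : ℝ :=
  GbarGen J lam b (gamCoef lam γ₁) (gamCoef lam γ₂) r₁ r₂

/-- `D̄(γ₁,γ₂)`. -/
def Dbar (J : ℝ) (lam b : ℤ → ℝ) (r₁ r₂ : ℕ) (γ₁ γ₂ : ℝ) : ℝ :=
  DbarGen J lam b (gamCoef lam γ₁) (gamCoef lam γ₂) r₁ r₂

/-- `γ_{1,j}` re-parametrized by `ω₁`. -/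
def gamOm1 (lam : ℤ → ℝ) (ω₁ : ℝ) (j : ℤ) : ℝ :=
  ω₁ * lam j / ((1 - ω₁) * lam 1 + ω₁ * lam j)

/-- `γ_{2,j}` re-parametrized by `ω₂`. -/
def gamOm2 (lam : ℤ → ℝ) (ω₂ : ℝ) (j : ℤ) : ℝ :=
  -(ω₂ * lam j) / ((1 - ω₂) * lam (-1) - ω₂ * lam j)

/-- `G̃(ω₁,ω₂)`. -/
def Gtil (J : ℝ) (lam b : ℤ → ℝ) (r₁ r₂ : ℕ) (ω₁ ω₂ : ℝ) : ℝ :=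
  GbarGen J lam b (gamOm1 lam ω₁) (gamOm2 lam ω₂) r₁ r₂

/-- `D̃(ω₁,ω₂)`. -/
def Dtil (J : ℝ) (lam b : ℤ → ℝ) (r₁ r₂ : ℕ) (ω₁ ω₂ : ℝ) : ℝ :=
  DbarGen J lam b (gamOm1 lam ω₁) (gamOm2 lam ω₂) r₁ r₂

/-- The standard normal cumulative distribution function `Φ`. -/
def stdCDF (x : ℝ) : ℝ := cdf (gaussianReal 0 1) x

lemma stdCDF_eq_integral (x : ℝ) :
    stdCDF x = ∫ t in Set.Iic x, gaussianPDFReal 0 1 t := by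
  rw [stdCDF, cdf_eq_real, measureReal_def, gaussianReal_apply_eq_integral 0 one_ne_zero,
    ENNReal.toReal_ofReal (integral_nonneg fun t => gaussianPDFReal_nonneg 0 1 t)]

lemma continuous_gaussPDF : Continuous (gaussianPDFReal 0 1) := by
  rw [gaussianPDFReal_def]
  fun_prop

lemma hasDerivAt_stdCDF (x : ℝ) : HasDerivAt stdCDF (gaussianPDFReal 0 1 x) x := by
  have hfun : ∀ y : ℝ, stdCDF y =
      (∫ t in Set.Iic (0:ℝ), gaussianPDFReal 0 1 t)
        + ∫ t in (0:ℝ)..y, gaussianPDFReal 0 1 t := by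
    intro y
    rw [stdCDF_eq_integral,
      ← intervalIntegral.integral_Iic_sub_Iic
        ((integrable_gaussianPDFReal 0 1).integrableOn)
        ((integrable_gaussianPDFReal 0 1).integrableOn)]
    ring
  have := (continuous_gaussPDF.integral_hasStrictDerivAt 0 x).hasDerivAt.const_add
    (∫ t in Set.Iic (0:ℝ), gaussianPDFReal 0 1 t)
  exact this.congr_of_eventuallyEq (Filter.Eventually.of_forall fun y => hfun y)

lemma hasDerivAt_hfun (Gb α c q0 q1 pi0 pi1 : ℝ) (θ : ℝ) :
    HasDerivAt (fun θ : ℝ =>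
        pi0 * stdCDF ((-Gb + α * (q0 - q1 - 2 * θ)) / c)
          + pi1 * stdCDF ((-Gb - α * (q0 - q1 - 2 * θ)) / c))
      (2 * α / c *
        (pi1 * gaussianPDFReal 0 1 ((-Gb - α * (q0 - q1 - 2 * θ)) / c)
          - pi0 * gaussianPDFReal 0 1 ((-Gb + α * (q0 - q1 - 2 * θ)) / c))) θ := by
  have hlin : HasDerivAt (fun θ : ℝ => q0 - q1 - 2 * θ) (-2) θ := by
    simpa using ((hasDerivAt_id θ).const_mul (2:ℝ)).const_sub (q0 - q1)
  have hu : HasDerivAt (fun θ : ℝ => (-Gb + α * (q0 - q1 - 2 * θ)) / c)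
      (α * (-2) / c) θ := ((hlin.const_mul α).const_add (-Gb)).div_const c
  have hv : HasDerivAt (fun θ : ℝ => (-Gb - α * (q0 - q1 - 2 * θ)) / c)
      (-(α * (-2)) / c) θ := ((hlin.const_mul α).const_sub (-Gb)).div_const c
  have h1 := ((hasDerivAt_stdCDF _).comp θ hu).const_mul pi0
  have h2 := ((hasDerivAt_stdCDF _).comp θ hv).const_mul pi1
  have := h1.add h2
  refine this.congr_deriv ?_
  ring

theorem optimal_intercept
    (Gb Db α ζ q0 q1 : ℝ)
    (hGb : 0 < Gb) (hα : 0 < α) (hζ : 0 ≤ ζ) (hDζ : 0 < Db + ζ)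
    (pi0 pi1 : ℝ) (hpi0 : 0 < pi0) (hpi1 : 0 < pi1) (hpisum : pi0 + pi1 = 1)
    (h : ℝ → ℝ)
    (hh : ∀ θ : ℝ, h θ =
      pi0 * stdCDF ((-Gb + α * (q0 - q1 - 2 * θ))
        / (2 * Real.sqrt α * Real.sqrt (Db + ζ)))
      + pi1 * stdCDF ((-Gb - α * (q0 - q1 - 2 * θ))
        / (2 * Real.sqrt α * Real.sqrt (Db + ζ))))
    (θs : ℝ)
    (hθs : θs = (1 / 2) * (q0 - q1) - ((Db + ζ) / Gb) * Real.log (pi1 / pi0)) :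
    (∀ θ : ℝ, h θs ≤ h θ) ∧ (∀ θ : ℝ, θ ≠ θs → h θs < h θ) := by
  have hc : 0 < 2 * Real.sqrt α * Real.sqrt (Db + ζ) := by positivity
  set c : ℝ := 2 * Real.sqrt α * Real.sqrt (Db + ζ) with hc_def
  have hc2 : c ^ 2 = 4 * α * (Db + ζ) := by
    rw [hc_def, mul_pow, mul_pow, Real.sq_sqrt hα.le, Real.sq_sqrt hDζ.le]; ring
  have hfun : h = fun θ : ℝ =>
      pi0 * stdCDF ((-Gb + α * (q0 - q1 - 2 * θ)) / c)
        + pi1 * stdCDF ((-Gb - α * (q0 - q1 - 2 * θ)) / c) := funext fun θ => hh θ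
  -- derivative
  have hder : ∀ θ : ℝ, HasDerivAt h
      (2 * α / c *
        (pi1 * gaussianPDFReal 0 1 ((-Gb - α * (q0 - q1 - 2 * θ)) / c)
          - pi0 * gaussianPDFReal 0 1 ((-Gb + α * (q0 - q1 - 2 * θ)) / c))) θ := by
    intro θ
    rw [hfun]
    exact hasDerivAt_hfun Gb α c q0 q1 pi0 pi1 θ
  have hcont : Continuous h := by
    have : Differentiable ℝ h := fun x => (hder x).differentiableAt
    exact this.continuous
  have hφ : ∀ x : ℝ, gaussianPDFReal 0 1 x
      = (Real.sqrt (2 * Real.pi))⁻¹ * Real.exp (-(x ^ 2 / 2)) := by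
    intro x
    simp [gaussianPDFReal, neg_div]
  have hk : 0 < (Real.sqrt (2 * Real.pi))⁻¹ := by positivity
  -- key sign fact
  have hsign : ∀ θ : ℝ,
      (θs < θ → pi0 * gaussianPDFReal 0 1 ((-Gb + α * (q0 - q1 - 2 * θ)) / c)
          < pi1 * gaussianPDFReal 0 1 ((-Gb - α * (q0 - q1 - 2 * θ)) / c))
      ∧ (θ < θs → pi1 * gaussianPDFReal 0 1 ((-Gb - α * (q0 - q1 - 2 * θ)) / c)
          < pi0 * gaussianPDFReal 0 1 ((-Gb + α * (q0 - q1 - 2 * θ)) / c)) := by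
    intro θ
    set s : ℝ := q0 - q1 - 2 * θ with hs_def
    have hGss : Gb * (q0 - q1 - 2 * θs)
        = 2 * (Db + ζ) * (Real.log pi1 - Real.log pi0) := by
      rw [hθs, Real.log_div hpi1.ne' hpi0.ne']
      field_simp
      ring
    have huv : ((-Gb - α * s) / c) ^ 2 - ((-Gb + α * s) / c) ^ 2
        = Gb * s / (Db + ζ) := by
      rw [div_pow, div_pow, div_sub_div_same, hc2]
      rw [div_eq_div_iff (by positivity) hDζ.ne']
      ring
    constructor
    · intro hθ
      have hsl : Gb * s < 2 * (Db + ζ) * (Real.log pi1 - Real.log pi0) := by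
        rw [← hGss]
        have : s < q0 - q1 - 2 * θs := by rw [hs_def]; linarith
        nlinarith
      have hexp : Real.log pi0 - ((-Gb + α * s) / c) ^ 2 / 2
          < Real.log pi1 - ((-Gb - α * s) / c) ^ 2 / 2 := by
        have h2 : ((-Gb - α * s) / c) ^ 2 - ((-Gb + α * s) / c) ^ 2
            < 2 * (Real.log pi1 - Real.log pi0) := by
          rw [huv, div_lt_iff₀ hDζ]
          nlinarith
        linarith
      have hlt : pi0 * Real.exp (-(((-Gb + α * s) / c) ^ 2 / 2))
          < pi1 * Real.exp (-(((-Gb - α * s) / c) ^ 2 / 2)) := by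
        have he : Real.exp (Real.log pi0 + -(((-Gb + α * s) / c) ^ 2 / 2))
            < Real.exp (Real.log pi1 + -(((-Gb - α * s) / c) ^ 2 / 2)) :=
          Real.exp_lt_exp.mpr (by linarith)
        rwa [Real.exp_add, Real.exp_add, Real.exp_log hpi0, Real.exp_log hpi1] at he
      rw [hφ, hφ]
      calc pi0 * ((Real.sqrt (2 * Real.pi))⁻¹
              * Real.exp (-(((-Gb + α * s) / c) ^ 2 / 2)))
          = (Real.sqrt (2 * Real.pi))⁻¹
              * (pi0 * Real.exp (-(((-Gb + α * s) / c) ^ 2 / 2))) := by ring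
        _ < (Real.sqrt (2 * Real.pi))⁻¹
              * (pi1 * Real.exp (-(((-Gb - α * s) / c) ^ 2 / 2))) :=
            mul_lt_mul_of_pos_left hlt hk
        _ = pi1 * ((Real.sqrt (2 * Real.pi))⁻¹
              * Real.exp (-(((-Gb - α * s) / c) ^ 2 / 2))) := by ring
    · intro hθ
      have hsl : 2 * (Db + ζ) * (Real.log pi1 - Real.log pi0) < Gb * s := by
        rw [← hGss]
        have : q0 - q1 - 2 * θs < s := by rw [hs_def]; linarith
        nlinarith
      have hexp : Real.log pi1 - ((-Gb - α * s) / c) ^ 2 / 2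
          < Real.log pi0 - ((-Gb + α * s) / c) ^ 2 / 2 := by
        have h2 : 2 * (Real.log pi1 - Real.log pi0)
            < ((-Gb - α * s) / c) ^ 2 - ((-Gb + α * s) / c) ^ 2 := by
          rw [huv, lt_div_iff₀ hDζ]
          nlinarith
        linarith
      have hlt : pi1 * Real.exp (-(((-Gb - α * s) / c) ^ 2 / 2))
          < pi0 * Real.exp (-(((-Gb + α * s) / c) ^ 2 / 2)) := by
        have he : Real.exp (Real.log pi1 + -(((-Gb - α * s) / c) ^ 2 / 2))
            < Real.exp (Real.log pi0 + -(((-Gb + α * s) / c) ^ 2 / 2)) :=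
          Real.exp_lt_exp.mpr (by linarith)
        rwa [Real.exp_add, Real.exp_add, Real.exp_log hpi0, Real.exp_log hpi1] at he
      rw [hφ, hφ]
      calc pi1 * ((Real.sqrt (2 * Real.pi))⁻¹
              * Real.exp (-(((-Gb - α * s) / c) ^ 2 / 2)))
          = (Real.sqrt (2 * Real.pi))⁻¹
              * (pi1 * Real.exp (-(((-Gb - α * s) / c) ^ 2 / 2))) := by ring
        _ < (Real.sqrt (2 * Real.pi))⁻¹
              * (pi0 * Real.exp (-(((-Gb + α * s) / c) ^ 2 / 2))) :=
            mul_lt_mul_of_pos_left hlt hk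
        _ = pi0 * ((Real.sqrt (2 * Real.pi))⁻¹
              * Real.exp (-(((-Gb + α * s) / c) ^ 2 / 2))) := by ring
  have hmono : StrictMonoOn h (Set.Ici θs) := by
    apply strictMonoOn_of_deriv_pos (convex_Ici θs) hcont.continuousOn
    intro x hx
    rw [interior_Ici] at hx
    rw [(hder x).deriv]
    have hx1 := (hsign x).1 hx
    have h2α : 0 < 2 * α / c := by positivity
    exact mul_pos h2α (by linarith)
  have hanti : StrictAntiOn h (Set.Iic θs) := by
    apply strictAntiOn_of_deriv_neg (convex_Iic θs) hcont.continuousOn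
    intro x hx
    rw [interior_Iic] at hx
    rw [(hder x).deriv]
    have hx2 := (hsign x).2 hx
    have h2α : 0 < 2 * α / c := by positivity
    exact mul_neg_of_pos_of_neg h2α (by linarith)
  have hstrict : ∀ θ : ℝ, θ ≠ θs → h θs < h θ := by
    intro θ hne
    rcases lt_or_gt_of_ne hne with hlt | hgt
    · exact hanti (le_of_lt hlt) (le_refl θs) hlt
    · exact hmono (le_refl θs) (le_of_lt hgt) hgt
  refine ⟨fun θ => ?_, hstrict⟩
  by_cases hθ : θ = θs
  · exact le_of_eq (by rw [hθ])
  · exact (hstrict θ hθ).le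
end
end

section
/- Under the spiked-model setup, for each fixed (γ₁,γ₂) ∈ 𝔸, the quantity (n₀⁻¹ + n₁⁻¹)·tr(H̃ Σ H̃ Σ) converges to σ⁴(J₀ + J₁) almost surely as n → ∞. -/
open MeasureTheory ProbabilityTheory Filter Matrix
open scoped BigOperators

noncomputable section

set_option linter.unusedSectionVars false
section AuxMat

variable {m : Type*} [Fintype m] [DecidableEq m]

lemma myTrace_vecMulVec (a b : m → ℝ) : (vecMulVec a b).trace = a ⬝ᵥ b := by
  simp [Matrix.trace, Matrix.diag, vecMulVec_apply, dotProduct]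

lemma myVecMulVec_mul (a b c d : m → ℝ) :
    vecMulVec a b * vecMulVec c d = (b ⬝ᵥ c) • vecMulVec a d := by
  ext i j
  simp only [Matrix.mul_apply, vecMulVec_apply, Matrix.smul_apply, smul_eq_mul, dotProduct,
    Finset.sum_mul]
  exact Finset.sum_congr rfl fun k _ => by ring

lemma myDot_le_one {a b : m → ℝ} (ha : a ⬝ᵥ a ≤ 1) (hb : b ⬝ᵥ b ≤ 1) : |a ⬝ᵥ b| ≤ 1 := by
  rw [abs_le_one_iff_mul_self_le_one]
  have h := Finset.sum_mul_sq_le_sq_mul_sq Finset.univ a b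
  have ha' : ∑ i, a i ^ 2 ≤ 1 := by simpa [dotProduct, sq] using ha
  have hb' : ∑ i, b i ^ 2 ≤ 1 := by simpa [dotProduct, sq] using hb
  have h0a : (0:ℝ) ≤ ∑ i, a i ^ 2 := Finset.sum_nonneg fun i _ => sq_nonneg _
  have h0b : (0:ℝ) ≤ ∑ i, b i ^ 2 := Finset.sum_nonneg fun i _ => sq_nonneg _
  have : (a ⬝ᵥ b) ^ 2 ≤ 1 := le_trans h (by nlinarith)
  nlinarith [this]

lemma myTrace_small {ι : Type*} (s : Finset ι) (e : ι → ℝ) (a b : ι → m → ℝ) :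
    (∑ x ∈ s, e x • vecMulVec (a x) (b x)).trace = ∑ x ∈ s, e x * (a x ⬝ᵥ b x) := by
  rw [Matrix.trace_sum]
  exact Finset.sum_congr rfl fun x _ => by
    rw [Matrix.trace_smul, myTrace_vecMulVec, smul_eq_mul]

lemma myAbs_trace_small {ι : Type*} (s : Finset ι) (e : ι → ℝ) (a b : ι → m → ℝ) (κ : ℝ)
    (he : ∀ x ∈ s, |e x| ≤ κ) (ha : ∀ x ∈ s, a x ⬝ᵥ a x ≤ 1) (hb : ∀ x ∈ s, b x ⬝ᵥ b x ≤ 1) :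
    |(∑ x ∈ s, e x • vecMulVec (a x) (b x)).trace| ≤ κ * s.card := by
  rw [myTrace_small]
  calc |∑ x ∈ s, e x * (a x ⬝ᵥ b x)| ≤ ∑ x ∈ s, |e x * (a x ⬝ᵥ b x)| :=
        Finset.abs_sum_le_sum_abs _ _
  _ ≤ ∑ _x ∈ s, κ := by
      refine Finset.sum_le_sum fun x hx => ?_
      rw [abs_mul]
      calc |e x| * |a x ⬝ᵥ b x| ≤ κ * 1 :=
            mul_le_mul (he x hx) (myDot_le_one (ha x hx) (hb x hx)) (abs_nonneg _)
              ((abs_nonneg (e x)).trans (he x hx))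
      _ = κ := mul_one κ
  _ = κ * s.card := by rw [Finset.sum_const, nsmul_eq_mul, mul_comm]

lemma mySmall_mul {ι ι' : Type*} (s : Finset ι) (t : Finset ι') (e : ι → ℝ) (e' : ι' → ℝ)
    (a b : ι → m → ℝ) (a' b' : ι' → m → ℝ) :
    (∑ x ∈ s, e x • vecMulVec (a x) (b x)) * (∑ y ∈ t, e' y • vecMulVec (a' y) (b' y))
      = ∑ q ∈ s ×ˢ t, (e q.1 * e' q.2 * (b q.1 ⬝ᵥ a' q.2)) • vecMulVec (a q.1) (b' q.2) := by
  rw [Finset.sum_mul_sum, Finset.sum_product]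
  refine Finset.sum_congr rfl fun x _ => Finset.sum_congr rfl fun y _ => ?_
  rw [smul_mul_assoc, mul_smul_comm, myVecMulVec_mul, smul_smul, smul_smul]

lemma myInv_one_add (I : Finset ℤ) (w : ℤ → m → ℝ)
    (horth : ∀ j ∈ I, ∀ k ∈ I, w j ⬝ᵥ w k = if j = k then (1:ℝ) else 0)
    (d : ℤ → ℝ) (hd : ∀ j ∈ I, 1 + d j ≠ 0) :
    (1 + ∑ j ∈ I, d j • vecMulVec (w j) (w j))⁻¹
      = 1 + ∑ j ∈ I, (-(d j) / (1 + d j)) • vecMulVec (w j) (w j) := by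
  apply Matrix.inv_eq_right_inv
  have hPQ : (∑ j ∈ I, d j • vecMulVec (w j) (w j))
      * (∑ j ∈ I, (-(d j) / (1 + d j)) • vecMulVec (w j) (w j))
      = ∑ j ∈ I, (d j * (-(d j) / (1 + d j))) • vecMulVec (w j) (w j) := by
    rw [mySmall_mul, Finset.sum_product]
    refine Finset.sum_congr rfl fun x hx => ?_
    rw [Finset.sum_eq_single x]
    · rw [horth x hx x hx, if_pos rfl, mul_one]
    · intro y hy hxy
      rw [horth x hx y hy, if_neg (fun h => hxy h.symm), mul_zero, zero_smul]
    · intro h; exact absurd hx h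
  have expand : (1 + ∑ j ∈ I, d j • vecMulVec (w j) (w j))
      * (1 + ∑ j ∈ I, (-(d j) / (1 + d j)) • vecMulVec (w j) (w j))
      = 1 + ((∑ j ∈ I, d j • vecMulVec (w j) (w j))
          + (∑ j ∈ I, (-(d j) / (1 + d j)) • vecMulVec (w j) (w j))
          + (∑ j ∈ I, d j • vecMulVec (w j) (w j))
            * (∑ j ∈ I, (-(d j) / (1 + d j)) • vecMulVec (w j) (w j))) := by
    noncomm_ring
  rw [expand, hPQ, ← Finset.sum_add_distrib, ← Finset.sum_add_distrib]
  have hz : ∀ j ∈ I, (d j • vecMulVec (w j) (w j)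
      + (-(d j) / (1 + d j)) • vecMulVec (w j) (w j)
      + (d j * (-(d j) / (1 + d j))) • vecMulVec (w j) (w j)) = 0 := by
    intro j hj
    rw [← add_smul, ← add_smul]
    have hne := hd j hj
    have hcoef : d j + -(d j) / (1 + d j) + d j * (-(d j) / (1 + d j)) = 0 := by
      field_simp
      ring
    rw [hcoef, zero_smul]
  rw [Finset.sum_congr rfl hz, Finset.sum_const, smul_zero, add_zero]

end AuxMat

section AuxBound

variable {m : Type*} [Fintype m] [DecidableEq m]

lemma myTrace_prod_bound {ι₁ ι₂ : Type*} (s : Finset ι₁) (t : Finset ι₂)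
    (cc : ι₁ → ℝ) (ll : ι₂ → ℝ) (w : ι₁ → m → ℝ) (v : ι₂ → m → ℝ)
    (κ₁ κ₂ : ℝ) (hκ₁ : 0 ≤ κ₁) (hκ₂ : 0 ≤ κ₂)
    (hc : ∀ j ∈ s, |cc j| ≤ κ₁) (hl : ∀ k ∈ t, |ll k| ≤ κ₂)
    (hw : ∀ j ∈ s, w j ⬝ᵥ w j ≤ 1) (hv : ∀ k ∈ t, v k ⬝ᵥ v k ≤ 1) :
    |((1 + ∑ j ∈ s, cc j • vecMulVec (w j) (w j))
        * (1 + ∑ k ∈ t, ll k • vecMulVec (v k) (v k))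
        * (1 + ∑ j ∈ s, cc j • vecMulVec (w j) (w j))
        * (1 + ∑ k ∈ t, ll k • vecMulVec (v k) (v k))).trace - (Fintype.card m : ℝ)|
      ≤ 2 * ((κ₁ + κ₂ + κ₁ * κ₂) * ((s.card : ℝ) + t.card + s.card * t.card))
        + ((κ₁ + κ₂ + κ₁ * κ₂) * ((s.card : ℝ) + t.card + s.card * t.card)) ^ 2 := by
  set κ := κ₁ + κ₂ + κ₁ * κ₂ with hκdef
  have hκ0 : 0 ≤ κ := by rw [hκdef]; positivity
  set Q := ∑ j ∈ s, cc j • vecMulVec (w j) (w j) with hQ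
  set R := ∑ k ∈ t, ll k • vecMulVec (v k) (v k) with hR
  set sT := (s.disjSum t).disjSum (s ×ˢ t) with hsT
  set eT : (ι₁ ⊕ ι₂) ⊕ ι₁ × ι₂ → ℝ :=
    Sum.elim (Sum.elim cc ll) (fun q => cc q.1 * ll q.2 * (w q.1 ⬝ᵥ v q.2)) with heT
  set aT : (ι₁ ⊕ ι₂) ⊕ ι₁ × ι₂ → m → ℝ := Sum.elim (Sum.elim w v) (fun q => w q.1) with haT
  set bT : (ι₁ ⊕ ι₂) ⊕ ι₁ × ι₂ → m → ℝ := Sum.elim (Sum.elim w v) (fun q => v q.2) with hbT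
  set T := ∑ x ∈ sT, eT x • vecMulVec (aT x) (bT x) with hT
  have hTQR : T = Q + R + Q * R := by
    rw [hT, hsT, Finset.sum_disjSum, Finset.sum_disjSum, hQ, hR, mySmall_mul]
    simp only [heT, haT, hbT, Sum.elim_inl, Sum.elim_inr]
  have hprod : (1 + Q) * (1 + R) * (1 + Q) * (1 + R) = 1 + (T + (T + T * T)) := by
    rw [hTQR]; noncomm_ring
  have hcard : (s.card : ℝ) + t.card + s.card * t.card = (sT.card : ℝ) := by
    rw [hsT, Finset.card_disjSum, Finset.card_disjSum, Finset.card_product]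
    push_cast; ring
  have heTb : ∀ x ∈ sT, |eT x| ≤ κ := by
    intro x hx
    rw [hsT, Finset.mem_disjSum] at hx
    rcases hx with ⟨y, hy, rfl⟩ | ⟨q, hq, rfl⟩
    · rw [Finset.mem_disjSum] at hy
      rcases hy with ⟨z, hz, rfl⟩ | ⟨z, hz, rfl⟩
      · simp only [heT, Sum.elim_inl]
        calc |cc z| ≤ κ₁ := hc z hz
        _ ≤ κ := by rw [hκdef]; nlinarith
      · simp only [heT, Sum.elim_inl, Sum.elim_inr]
        calc |ll z| ≤ κ₂ := hl z hz
        _ ≤ κ := by rw [hκdef]; nlinarith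
    · rw [Finset.mem_product] at hq
      simp only [heT, Sum.elim_inr]
      rw [abs_mul, abs_mul]
      have h1 := hc q.1 hq.1
      have h2 := hl q.2 hq.2
      have h3 : |w q.1 ⬝ᵥ v q.2| ≤ 1 := myDot_le_one (hw q.1 hq.1) (hv q.2 hq.2)
      calc |cc q.1| * |ll q.2| * |w q.1 ⬝ᵥ v q.2| ≤ κ₁ * κ₂ * 1 := by
            apply mul_le_mul (mul_le_mul h1 h2 (abs_nonneg _) hκ₁) h3 (abs_nonneg _)
              (by positivity)
      _ ≤ κ := by rw [hκdef]; nlinarith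
  have haTb : ∀ x ∈ sT, aT x ⬝ᵥ aT x ≤ 1 := by
    intro x hx
    rw [hsT, Finset.mem_disjSum] at hx
    rcases hx with ⟨y, hy, rfl⟩ | ⟨q, hq, rfl⟩
    · rw [Finset.mem_disjSum] at hy
      rcases hy with ⟨z, hz, rfl⟩ | ⟨z, hz, rfl⟩
      · simpa only [haT, Sum.elim_inl] using hw z hz
      · simpa only [haT, Sum.elim_inl, Sum.elim_inr] using hv z hz
    · rw [Finset.mem_product] at hq
      simpa only [haT, Sum.elim_inr] using hw q.1 hq.1
  have hbTb : ∀ x ∈ sT, bT x ⬝ᵥ bT x ≤ 1 := by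
    intro x hx
    rw [hsT, Finset.mem_disjSum] at hx
    rcases hx with ⟨y, hy, rfl⟩ | ⟨q, hq, rfl⟩
    · rw [Finset.mem_disjSum] at hy
      rcases hy with ⟨z, hz, rfl⟩ | ⟨z, hz, rfl⟩
      · simpa only [hbT, Sum.elim_inl] using hw z hz
      · simpa only [hbT, Sum.elim_inl, Sum.elim_inr] using hv z hz
    · rw [Finset.mem_product] at hq
      simpa only [hbT, Sum.elim_inr] using hv q.2 hq.2
  have h1 : |T.trace| ≤ κ * sT.card := by
    rw [hT]; exact myAbs_trace_small sT eT aT bT κ heTb haTb hbTb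
  have h2 : |(T * T).trace| ≤ (κ * sT.card) * (κ * sT.card) := by
    rw [hT, mySmall_mul]
    have hco : ∀ q ∈ sT ×ˢ sT, |eT q.1 * eT q.2 * (bT q.1 ⬝ᵥ aT q.2)| ≤ κ * κ := by
      intro q hq
      rw [Finset.mem_product] at hq
      rw [abs_mul, abs_mul]
      have e1 := heTb q.1 hq.1
      have e2 := heTb q.2 hq.2
      have e3 : |bT q.1 ⬝ᵥ aT q.2| ≤ 1 := myDot_le_one (hbTb q.1 hq.1) (haTb q.2 hq.2)
      calc |eT q.1| * |eT q.2| * |bT q.1 ⬝ᵥ aT q.2| ≤ κ * κ * 1 := by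
            apply mul_le_mul (mul_le_mul e1 e2 (abs_nonneg _) hκ0) e3 (abs_nonneg _)
              (by positivity)
      _ = κ * κ := mul_one _
    have hA : ∀ q ∈ sT ×ˢ sT, aT q.1 ⬝ᵥ aT q.1 ≤ 1 := by
      intro q hq; rw [Finset.mem_product] at hq; exact haTb q.1 hq.1
    have hB : ∀ q ∈ sT ×ˢ sT, bT q.2 ⬝ᵥ bT q.2 ≤ 1 := by
      intro q hq; rw [Finset.mem_product] at hq; exact hbTb q.2 hq.2
    calc |(∑ q ∈ sT ×ˢ sT,
          (eT q.1 * eT q.2 * (bT q.1 ⬝ᵥ aT q.2)) • vecMulVec (aT q.1) (bT q.2)).trace|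
        ≤ (κ * κ) * ((sT ×ˢ sT).card : ℝ) :=
          myAbs_trace_small (sT ×ˢ sT) _ _ _ (κ * κ) hco hA hB
      _ = (κ * sT.card) * (κ * sT.card) := by
          rw [Finset.card_product]; push_cast; ring
  rw [hprod, hcard]
  have htr : ((1 : Matrix m m ℝ) + (T + (T + T * T))).trace
      = (Fintype.card m : ℝ) + (T.trace + (T.trace + (T * T).trace)) := by
    rw [Matrix.trace_add, Matrix.trace_add, Matrix.trace_add, Matrix.trace_one]
  rw [htr]
  have habs : |(Fintype.card m : ℝ) + (T.trace + (T.trace + (T * T).trace))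
      - (Fintype.card m : ℝ)| = |T.trace + (T.trace + (T * T).trace)| := by
    congr 1; ring
  rw [habs]
  have ha1 := abs_add_le (T.trace) (T.trace + (T * T).trace)
  have ha2 := abs_add_le (T.trace) ((T * T).trace)
  have hsq : (κ * (sT.card : ℝ)) ^ 2 = (κ * sT.card) * (κ * sT.card) := sq (κ * (sT.card:ℝ))
  nlinarith [h1, h2, ha1, ha2]

end AuxBound

/-- diagonal coefficient -/
def dC (γ₁ γ₂ : ℝ) (lam : ℤ → ℝ) (j : ℤ) : ℝ := (if 0 < j then γ₁ else γ₂) * lam j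

/-- inverse coefficient -/
def cC (γ₁ γ₂ : ℝ) (lam : ℤ → ℝ) (j : ℤ) : ℝ :=
  -(dC γ₁ γ₂ lam j) / (1 + dC γ₁ γ₂ lam j)

/-- uniform error constant -/
def ECdef (σ2 κ₁ κ₂ : ℝ) (c : ℕ) : ℝ :=
  σ2 ^ 2 * (2 * ((κ₁ + κ₂ + κ₁ * κ₂) * ((c : ℝ) + c + c * c))
    + ((κ₁ + κ₂ + κ₁ * κ₂) * ((c : ℝ) + c + c * c)) ^ 2)

lemma abs_helper {A P C σ2 : ℝ} (h : |A - P| ≤ C) :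
    |σ2 * σ2 * A - σ2 ^ 2 * P| ≤ σ2 ^ 2 * C := by
  have he : σ2 * σ2 * A - σ2 ^ 2 * P = σ2 ^ 2 * (A - P) := by ring
  rw [he, abs_mul, abs_of_nonneg (sq_nonneg σ2)]
  exact mul_le_mul_of_nonneg_left h (sq_nonneg σ2)

lemma abs_helper2 {c A P E s : ℝ} (hc : 0 ≤ c) (h : |A - s * P| ≤ E) :
    |c * A - s * (P * c)| ≤ c * E := by
  have he : c * A - s * (P * c) = c * (A - s * P) := by ring
  rw [he, abs_mul, abs_of_nonneg hc]
  exact mul_le_mul_of_nonneg_left h hc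

lemma per_n {p : ℕ} (I1f I2f : Finset ℤ) (hdisj : Disjoint I1f I2f)
    (lam : ℤ → ℝ) (γ₁ γ₂ σ2 : ℝ)
    (w : ℤ → Fin p → ℝ) (vv : ℤ → Fin p → ℝ)
    (horth : ∀ j ∈ I1f ∪ I2f, ∀ k ∈ I1f ∪ I2f, w j ⬝ᵥ w k = if j = k then (1:ℝ) else 0)
    (hvv : ∀ j ∈ I1f ∪ I2f, vv j ⬝ᵥ vv j ≤ 1)
    (hdne : ∀ j ∈ I1f ∪ I2f, 1 + dC γ₁ γ₂ lam j ≠ 0)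
    (hpos : ∀ j ∈ I1f, 0 < j) (hneg : ∀ j ∈ I2f, ¬ 0 < j)
    (H Sg : Matrix (Fin p) (Fin p) ℝ)
    (hHdef : H = (1 + γ₁ • ∑ j ∈ I1f, lam j • vecMulVec (w j) (w j)
        + γ₂ • ∑ j ∈ I2f, lam j • vecMulVec (w j) (w j))⁻¹)
    (hSgdef : Sg = σ2 • (1 + ∑ j ∈ I1f ∪ I2f, lam j • vecMulVec (vv j) (vv j)))
    (κ₁ κ₂ : ℝ) (hκ₁ : 0 ≤ κ₁) (hκ₂ : 0 ≤ κ₂)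
    (hcb : ∀ j ∈ I1f ∪ I2f, |cC γ₁ γ₂ lam j| ≤ κ₁)
    (hlb : ∀ j ∈ I1f ∪ I2f, |lam j| ≤ κ₂) :
    |(H * Sg * H * Sg).trace - σ2 ^ 2 * (p : ℝ)|
      ≤ ECdef σ2 κ₁ κ₂ (I1f ∪ I2f).card := by
  have hw1 : ∀ j ∈ I1f ∪ I2f, w j ⬝ᵥ w j ≤ 1 := by
    intro j hj
    rw [horth j hj j hj, if_pos rfl]
  have hH : H = 1 + ∑ j ∈ I1f ∪ I2f, cC γ₁ γ₂ lam j • vecMulVec (w j) (w j) := by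
    rw [hHdef]
    have hP : (1 : Matrix (Fin p) (Fin p) ℝ)
        + γ₁ • ∑ j ∈ I1f, lam j • vecMulVec (w j) (w j)
        + γ₂ • ∑ j ∈ I2f, lam j • vecMulVec (w j) (w j)
        = 1 + ∑ j ∈ I1f ∪ I2f, dC γ₁ γ₂ lam j • vecMulVec (w j) (w j) := by
      rw [Finset.sum_union hdisj, add_assoc]
      congr 1
      rw [Finset.smul_sum, Finset.smul_sum]
      congr 1
      · exact Finset.sum_congr rfl fun j hj => by
          rw [smul_smul]
          congr 1
          simp only [dC, if_pos (hpos j hj)]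
      · exact Finset.sum_congr rfl fun j hj => by
          rw [smul_smul]
          congr 1
          simp only [dC, if_neg (hneg j hj)]
    rw [hP, myInv_one_add (I1f ∪ I2f) w horth _ hdne]
    rfl
  rw [hH, hSgdef]
  simp only [mul_smul_comm, smul_mul_assoc, smul_smul, Matrix.trace_smul, smul_eq_mul]
  have hper := myTrace_prod_bound (I1f ∪ I2f) (I1f ∪ I2f) (cC γ₁ γ₂ lam) lam w vv
    κ₁ κ₂ hκ₁ hκ₂ hcb hlb hw1 hvv
  rw [Fintype.card_fin] at hper
  have := abs_helper (σ2 := σ2) hper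
  calc _ ≤ σ2 ^ 2 * (2 * ((κ₁ + κ₂ + κ₁ * κ₂)
      * (((I1f ∪ I2f).card : ℝ) + (I1f ∪ I2f).card + (I1f ∪ I2f).card * (I1f ∪ I2f).card))
      + ((κ₁ + κ₂ + κ₁ * κ₂) * (((I1f ∪ I2f).card : ℝ) + (I1f ∪ I2f).card
        + (I1f ∪ I2f).card * (I1f ∪ I2f).card)) ^ 2) := this
  _ = ECdef σ2 κ₁ κ₂ (I1f ∪ I2f).card := by rw [ECdef]

theorem trace_HSigma_limit
    {Ω : Type*} [MeasureSpace Ω] [IsProbabilityMeasure (ℙ : Measure Ω)]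
    (pp nn0 nn1 : ℕ → ℕ)
    (hsplit : ∀ n, nn0 n + nn1 n = n)
    (hp : ∀ n, 0 < pp n)
    (J0 J1 J : ℝ) (hJ0 : 0 < J0) (hJ1 : 0 < J1) (hJ : 0 < J) (hJlt : J < 1)
    (hlim0 : Tendsto (fun n => (pp n : ℝ) / (nn0 n : ℝ)) atTop (nhds J0))
    (hlim1 : Tendsto (fun n => (pp n : ℝ) / (nn1 n : ℝ)) atTop (nhds J1))
    (hlim : Tendsto (fun n => (pp n : ℝ) / (n : ℝ)) atTop (nhds J))
    (r₁ r₂ : ℕ) (lam : ℤ → ℝ)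
    (hlam1 : ∀ j ∈ I1 r₁, Real.sqrt J < lam j)
    (hlam2 : ∀ j ∈ I2 r₂, -1 < lam j ∧ lam j < -Real.sqrt J)
    (hanti1 : StrictAntiOn lam (I1 r₁ : Set ℤ))
    (hanti2 : StrictAntiOn lam (I2 r₂ : Set ℤ))
    (σ2 : ℝ) (hσ2 : 0 < σ2)
    (v : ∀ n, ℤ → Fin (pp n) → ℝ)
    (hv : ∀ n, ∀ i ∈ I1 r₁ ∪ I2 r₂, ∀ j ∈ I1 r₁ ∪ I2 r₂,
      v n i ⬝ᵥ v n j = if i = j then (1 : ℝ) else 0)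
    (Sigm : ∀ n, Matrix (Fin (pp n)) (Fin (pp n)) ℝ)
    (hSig : ∀ n, Sigm n = σ2 • ((1 : Matrix (Fin (pp n)) (Fin (pp n)) ℝ)
        + ∑ j ∈ I1 r₁ ∪ I2 r₂, lam j • vecMulVec (v n j) (v n j)))
    (hSigbdd : ∃ C, ∀ n (w : Fin (pp n) → ℝ),
      (Sigm n).mulVec w ⬝ᵥ (Sigm n).mulVec w ≤ C * (w ⬝ᵥ w))
    (μ0 μ1 : ∀ n, Fin (pp n) → ℝ)
    (hμ0 : ∃ C, ∀ n, μ0 n ⬝ᵥ μ0 n ≤ C) (hμ1 : ∃ C, ∀ n, μ1 n ⬝ᵥ μ1 n ≤ C)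
    (Z : ∀ n, Ω → Fin (pp n) → Fin n → ℝ)
    (hZmeas : ∀ n i j, Measurable fun ω => Z n ω i j)
    (hZindep : ∀ n, iIndepFun
      (fun (ij : Fin (pp n) × Fin n) => fun ω => Z n ω ij.1 ij.2) ℙ)
    (hZlaw : ∀ n i j, Measure.map (fun ω => Z n ω i j) ℙ = gaussianReal 0 1)
    (A : ∀ n, Matrix (Fin (pp n)) (Fin (pp n)) ℝ)
    (hA : ∀ n, A n * A n = Sigm n ∧ (A n).IsHermitian)
    (x : ∀ n, Fin n → Ω → Fin (pp n) → ℝ)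
    (hx : ∀ n k ω, x n k ω
      = (if (k : ℕ) < nn0 n then μ0 n else μ1 n) + (A n).mulVec fun i => Z n ω i k)
    (xbar0 xbar1 : ∀ n, Ω → Fin (pp n) → ℝ)
    (hxbar0 : ∀ n ω, xbar0 n ω
      = (nn0 n : ℝ)⁻¹ • ∑ k : Fin n, if (k : ℕ) < nn0 n then x n k ω else 0)
    (hxbar1 : ∀ n ω, xbar1 n ω
      = (nn1 n : ℝ)⁻¹ • ∑ k : Fin n, if (k : ℕ) < nn0 n then 0 else x n k ω)
    (S : ∀ n, Ω → Matrix (Fin (pp n)) (Fin (pp n)) ℝ)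
    (hSdef : ∀ n ω, S n ω = ((n : ℝ) - 2)⁻¹ •
      ∑ k : Fin n, (if (k : ℕ) < nn0 n
        then vecMulVec (x n k ω - xbar0 n ω) (x n k ω - xbar0 n ω)
        else vecMulVec (x n k ω - xbar1 n ω) (x n k ω - xbar1 n ω)))
    (l : ∀ n, Ω → Fin (pp n) → ℝ) (u : ∀ n, Ω → Fin (pp n) → Fin (pp n) → ℝ)
    (huorth : ∀ n ω i j, u n ω i ⬝ᵥ u n ω j = if i = j then (1 : ℝ) else 0)
    (heig : ∀ n ω j, (S n ω).mulVec (u n ω j) = l n ω j • u n ω j)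
    (hmono : ∀ n ω, Antitone (l n ω))
    (M δ : ℝ) (hM : 0 < M) (hδ : 0 < δ)
    (Aset : Set (ℝ × ℝ))
    (hAset : Aset = {γ : ℝ × ℝ | 0 < γ.1 ∧ γ.1 < M ∧ 0 < γ.2 ∧ γ.2 < M ∧
      ∀ j ∈ I2 r₂, δ ≤ |γ.2 - |lam j|⁻¹|})
    (Htil : ∀ n, Ω → ℝ → ℝ → Matrix (Fin (pp n)) (Fin (pp n)) ℝ)
    (hHtil : ∀ n ω γ₁ γ₂, Htil n ω γ₁ γ₂
      = ((1 : Matrix (Fin (pp n)) (Fin (pp n)) ℝ)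
        + γ₁ • ∑ j ∈ I1 r₁, lam j • vecMulVec (u n ω (spikeIdx (pp n) (hp n) j))
            (u n ω (spikeIdx (pp n) (hp n) j))
        + γ₂ • ∑ j ∈ I2 r₂, lam j • vecMulVec (u n ω (spikeIdx (pp n) (hp n) j))
            (u n ω (spikeIdx (pp n) (hp n) j)))⁻¹)
    (γ₁ γ₂ : ℝ) (hγ : (γ₁, γ₂) ∈ Aset) :
    ∀ᵐ ω ∂(ℙ : Measure Ω), Tendsto (fun n =>
      ((nn0 n : ℝ)⁻¹ + (nn1 n : ℝ)⁻¹)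
        * (Htil n ω γ₁ γ₂ * Sigm n * Htil n ω γ₁ γ₂ * Sigm n).trace)
      atTop (nhds (σ2 ^ 2 * (J0 + J1))) := by
  classical
  rw [hAset] at hγ
  simp only [Set.mem_setOf_eq] at hγ
  obtain ⟨hγ1, hγ1M, hγ2, hγ2M, hγδ⟩ := hγ
  have hsqrtJ : 0 < Real.sqrt J := Real.sqrt_pos.mpr hJ
  have hdisj : Disjoint (I1 r₁) (I2 r₂) := by
    rw [Finset.disjoint_left]
    intro a ha hb
    rw [I1, Finset.mem_Icc] at ha
    rw [I2, Finset.mem_Icc] at hb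
    omega
  have hpos : ∀ j ∈ I1 r₁, 0 < j := by
    intro j hj; rw [I1, Finset.mem_Icc] at hj; omega
  have hneg : ∀ j ∈ I2 r₂, ¬ 0 < j := by
    intro j hj; rw [I2, Finset.mem_Icc] at hj; omega
  have hdne : ∀ j ∈ I1 r₁ ∪ I2 r₂, 1 + dC γ₁ γ₂ lam j ≠ 0 := by
    intro j hj
    rcases Finset.mem_union.mp hj with hj1 | hj2
    · have hjp := hpos j hj1
      have hlj := hlam1 j hj1
      simp only [dC, if_pos hjp]
      have hmul : 0 < γ₁ * lam j := mul_pos hγ1 (lt_trans hsqrtJ hlj)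
      intro h0; linarith
    · have hjn := hneg j hj2
      obtain ⟨hl1, hl2⟩ := hlam2 j hj2
      have hlneg : lam j < 0 := by linarith
      have hδj := hγδ j hj2
      simp only [dC, if_neg hjn]
      intro h0
      have hγeq : γ₂ = |lam j|⁻¹ := by
        rw [abs_of_neg hlneg, inv_eq_one_div, eq_div_iff (by linarith : -lam j ≠ 0)]
        nlinarith [h0]
      rw [hγeq, sub_self, abs_zero] at hδj
      linarith
  set Cb := ∑ j ∈ I1 r₁ ∪ I2 r₂, |cC γ₁ γ₂ lam j| with hCb
  set Lb := ∑ j ∈ I1 r₁ ∪ I2 r₂, |lam j| with hLb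
  have hCb0 : 0 ≤ Cb := Finset.sum_nonneg fun j _ => abs_nonneg _
  have hLb0 : 0 ≤ Lb := Finset.sum_nonneg fun j _ => abs_nonneg _
  have hcB : ∀ j ∈ I1 r₁ ∪ I2 r₂, |cC γ₁ γ₂ lam j| ≤ Cb := fun j hj =>
    Finset.single_le_sum (f := fun j => |cC γ₁ γ₂ lam j|) (fun i _ => abs_nonneg _) hj
  have hlB : ∀ j ∈ I1 r₁ ∪ I2 r₂, |lam j| ≤ Lb := fun j hj =>
    Finset.single_le_sum (f := fun j => |lam j|) (fun i _ => abs_nonneg _) hj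
  have hppTop : Tendsto (fun n => (pp n : ℝ)) atTop atTop := by
    have h1 : Tendsto (fun n => (pp n : ℝ) / (n : ℝ) * (n : ℝ)) atTop atTop :=
      hlim.pos_mul_atTop hJ tendsto_natCast_atTop_atTop
    refine Tendsto.congr' ?_ h1
    filter_upwards [eventually_ge_atTop 1] with n hn
    rw [div_mul_cancel₀]
    exact Nat.cast_ne_zero.mpr (by omega)
  have hinv0 : ∀ (nn : ℕ → ℕ) (J' : ℝ),
      Tendsto (fun n => (pp n : ℝ) / (nn n : ℝ)) atTop (nhds J') →
      Tendsto (fun n => (nn n : ℝ)⁻¹) atTop (nhds 0) := by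
    intro nn J' hlim'
    have he : (fun n => (nn n : ℝ)⁻¹)
        = fun n => ((pp n : ℝ) / (nn n : ℝ)) * (pp n : ℝ)⁻¹ := by
      funext n
      have hpne : (pp n : ℝ) ≠ 0 := Nat.cast_ne_zero.mpr (hp n).ne'
      rw [div_eq_mul_inv, mul_right_comm, mul_inv_cancel₀ hpne, one_mul]
    rw [he]
    have := hlim'.mul hppTop.inv_tendsto_atTop
    simpa using this
  have hn0inv := hinv0 nn0 J0 hlim0
  have hn1inv := hinv0 nn1 J1 hlim1
  set ECb := ECdef σ2 Cb Lb (I1 r₁ ∪ I2 r₂).card with hECb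
  have hmain : Tendsto (fun n => σ2 ^ 2 * ((pp n : ℝ) / (nn0 n : ℝ) + (pp n : ℝ) / (nn1 n : ℝ)))
      atTop (nhds (σ2 ^ 2 * (J0 + J1))) := (hlim0.add hlim1).const_mul _
  have hbnd : Tendsto (fun n => ((nn0 n : ℝ)⁻¹ + (nn1 n : ℝ)⁻¹) * ECb) atTop (nhds 0) := by
    have := (hn0inv.add hn1inv).mul_const ECb
    simpa using this
  have hev2 : ∀ᶠ n in atTop, r₁ + r₂ ≤ pp n := by
    have h := Filter.Tendsto.eventually_ge_atTop hppTop ((r₁ + r₂ : ℕ) : ℝ)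
    filter_upwards [h] with n hn
    exact_mod_cast hn
  refine Filter.Eventually.of_forall fun ω => ?_
  have hkey : ∀ n, r₁ + r₂ ≤ pp n →
      |((nn0 n : ℝ)⁻¹ + (nn1 n : ℝ)⁻¹)
          * (Htil n ω γ₁ γ₂ * Sigm n * Htil n ω γ₁ γ₂ * Sigm n).trace
        - σ2 ^ 2 * ((pp n : ℝ) / (nn0 n : ℝ) + (pp n : ℝ) / (nn1 n : ℝ))|
      ≤ ((nn0 n : ℝ)⁻¹ + (nn1 n : ℝ)⁻¹) * ECb := by
    intro n hn
    have hrp : (r₁ : ℤ) + (r₂ : ℤ) ≤ ((pp n : ℕ) : ℤ) := by exact_mod_cast hn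
    have hval : ∀ j ∈ I1 r₁ ∪ I2 r₂,
        ((spikeIdx (pp n) (hp n) j).val : ℤ)
          = if 0 < j then j - 1 else (pp n : ℤ) + j := by
      intro j hj
      have hrfl : (spikeIdx (pp n) (hp n) j).val
          = ((if 0 < j then j - 1 else j) % ((pp n : ℕ) : ℤ)).toNat := rfl
      rw [hrfl]
      rcases Finset.mem_union.mp hj with hj1 | hj2
      · rw [I1, Finset.mem_Icc] at hj1
        rw [if_pos (by omega : (0:ℤ) < j), if_pos (by omega : (0:ℤ) < j)]
        rw [Int.emod_eq_of_lt (by omega) (by omega)]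
        exact Int.toNat_of_nonneg (by omega)
      · rw [I2, Finset.mem_Icc] at hj2
        rw [if_neg (by omega : ¬ (0:ℤ) < j), if_neg (by omega : ¬ (0:ℤ) < j)]
        have h3 := Int.add_mul_emod_self_left j ((pp n : ℕ) : ℤ) 1
        rw [mul_one] at h3
        have h2 : j % ((pp n : ℕ) : ℤ) = ((pp n : ℕ) : ℤ) + j := by
          rw [← h3, Int.emod_eq_of_lt (by omega) (by omega)]
          omega
        rw [h2]
        exact Int.toNat_of_nonneg (by omega)
    have hinj : ∀ j ∈ I1 r₁ ∪ I2 r₂, ∀ k ∈ I1 r₁ ∪ I2 r₂,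
        spikeIdx (pp n) (hp n) j = spikeIdx (pp n) (hp n) k → j = k := by
      intro j hj k hk hjk
      have h1 := hval j hj
      have h2 := hval k hk
      have h3 : ((spikeIdx (pp n) (hp n) j).val : ℤ)
          = ((spikeIdx (pp n) (hp n) k).val : ℤ) := by rw [hjk]
      rw [h1, h2] at h3
      simp only [I1, I2, Finset.mem_union, Finset.mem_Icc] at hj hk
      split_ifs at h3 <;> omega
    have horth' : ∀ j ∈ I1 r₁ ∪ I2 r₂, ∀ k ∈ I1 r₁ ∪ I2 r₂,
        u n ω (spikeIdx (pp n) (hp n) j) ⬝ᵥ u n ω (spikeIdx (pp n) (hp n) k)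
          = if j = k then (1:ℝ) else 0 := by
      intro j hj k hk
      rw [huorth n ω]
      by_cases h : j = k
      · rw [if_pos h, if_pos (by rw [h])]
      · rw [if_neg h, if_neg fun hf => h (hinj j hj k hk hf)]
    have hvv' : ∀ j ∈ I1 r₁ ∪ I2 r₂, v n j ⬝ᵥ v n j ≤ 1 := by
      intro j hj
      rw [hv n j hj j hj, if_pos rfl]
    have hper := per_n (I1 r₁) (I2 r₂) hdisj lam γ₁ γ₂ σ2
      (fun j => u n ω (spikeIdx (pp n) (hp n) j)) (v n) horth' hvv' hdne hpos hneg
      (Htil n ω γ₁ γ₂) (Sigm n) (hHtil n ω γ₁ γ₂) (hSig n)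
      Cb Lb hCb0 hLb0 hcB hlB
    rw [← hECb] at hper
    have hc0 : (0:ℝ) ≤ (nn0 n : ℝ)⁻¹ + (nn1 n : ℝ)⁻¹ := by positivity
    have hPc : (pp n : ℝ) / (nn0 n : ℝ) + (pp n : ℝ) / (nn1 n : ℝ)
        = (pp n : ℝ) * ((nn0 n : ℝ)⁻¹ + (nn1 n : ℝ)⁻¹) := by
      rw [div_eq_mul_inv, div_eq_mul_inv, ← mul_add]
    rw [hPc]
    exact abs_helper2 hc0 hper
  have hdiff : Tendsto (fun n =>
      ((nn0 n : ℝ)⁻¹ + (nn1 n : ℝ)⁻¹)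
          * (Htil n ω γ₁ γ₂ * Sigm n * Htil n ω γ₁ γ₂ * Sigm n).trace
        - σ2 ^ 2 * ((pp n : ℝ) / (nn0 n : ℝ) + (pp n : ℝ) / (nn1 n : ℝ)))
      atTop (nhds 0) := by
    apply squeeze_zero_norm' _ hbnd
    filter_upwards [hev2] with n hn
    rw [Real.norm_eq_abs]
    exact hkey n hn
  have hfin := hmain.add hdiff
  rw [add_zero] at hfin
  exact hfin.congr fun n => by ring
end
end
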